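/- Let R be a commutative ring and M an R-module such that every non-zerodivisor on M is a non-zerodivisor of R, and let U be the multiplicative set of all non-zerodivisors on M. Then the canonical ring homomorphism R(+)M → (U⁻¹R)(+)(U⁻¹M) exhibits (U⁻¹R)(+)(U⁻¹M) as the total quotient ring of R(+)M; that is, (U⁻¹R)(+)(U⁻¹M) is the localization of R(+)M at the multiplicative set of its non-zerodivisors. Moreover, under this hypothesis, (x, m) ∈ R(+)M is a non-zerodivisor of R(+)M if and only if x ∈ U, and (x, m) is a unit of R(+)M if and only if x is a unit of R. -/

import Mathlib

open TrivSqZeroExt MulOpposite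

/-- The multiplicative set `U` of all non-zerodivisors on the module `M`. -/
def regOnSubmonoid (R M : Type*) [CommRing R] [AddCommGroup M] [Module R M] :
    Submonoid R where
  carrier := {a : R | ∀ m : M, a • m = 0 → m = 0}
  one_mem' := fun m hm => by simpa using hm
  mul_mem' := by
    intro a b ha hb m hm
    rw [mul_smul] at hm
    exact hb m (ha _ hm)

section

variable (R M : Type*) [CommRing R] [AddCommGroup M] [Module R M]

/-- The right-module structure on `U⁻¹M` over `(U⁻¹R)ᵐᵒᵖ` given by commutativity. -/
noncomputable local instance locMopModule :
    Module (Localization (regOnSubmonoid R M))ᵐᵒᵖ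
      (LocalizedModule (regOnSubmonoid R M) M) :=
  Module.compHom _ ((RingHom.id (Localization (regOnSubmonoid R M))).fromOpposite mul_comm)

local instance locCentral :
    IsCentralScalar (Localization (regOnSubmonoid R M))
      (LocalizedModule (regOnSubmonoid R M) M) :=
  ⟨fun _ _ => rfl⟩

/-- Auxiliary: the canonical ring hom. -/
noncomputable def philoc [Module Rᵐᵒᵖ M] [IsCentralScalar R M] :
    TrivSqZeroExt R M →+*
      TrivSqZeroExt (Localization (regOnSubmonoid R M))
        (LocalizedModule (regOnSubmonoid R M) M) where
  toFun z := ⟨algebraMap R (Localization (regOnSubmonoid R M)) z.fst,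
      LocalizedModule.mkLinearMap (regOnSubmonoid R M) M z.snd⟩
  map_one' := by ext <;> simp
  map_mul' x y := by
    ext
    · simp; rfl
    · show LocalizedModule.mkLinearMap (regOnSubmonoid R M) M
          (x.fst • y.snd + op y.fst • x.snd) = _
      rw [op_smul_eq_smul, map_add, map_smul, map_smul]
      show _ = algebraMap R (Localization (regOnSubmonoid R M)) x.fst •
          LocalizedModule.mkLinearMap (regOnSubmonoid R M) M y.snd +
        op (algebraMap R (Localization (regOnSubmonoid R M)) y.fst) •
          LocalizedModule.mkLinearMap (regOnSubmonoid R M) M x.snd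
      rw [op_smul_eq_smul, algebraMap_smul, algebraMap_smul]
  map_zero' := by ext <;> simp
  map_add' x y := by
    ext
    · simp; rfl
    · exact map_add (LocalizedModule.mkLinearMap (regOnSubmonoid R M) M) x.snd y.snd

/-- Suppose every non-zerodivisor on `M` is a non-zerodivisor of `R`,
and let `U` be the multiplicative set of non-zerodivisors on `M`.  Then the canonical map
`R(+)M → (U⁻¹R)(+)(U⁻¹M)` exhibits `(U⁻¹R)(+)(U⁻¹M)` as the total quotient ring of the
idealization `R(+)M`; moreover `(x, m)` is a non-zerodivisor of `R(+)M` iff `x ∈ U`, and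
`(x, m)` is a unit of `R(+)M` iff `x` is a unit of `R`. -/
theorem idealization_totalQuotientRing [Module Rᵐᵒᵖ M] [IsCentralScalar R M]
    (hU : ∀ a : R, (∀ m : M, a • m = 0 → m = 0) → a ∈ nonZeroDivisors R) :
    (∃ φ : TrivSqZeroExt R M →+*
        TrivSqZeroExt (Localization (regOnSubmonoid R M))
          (LocalizedModule (regOnSubmonoid R M) M),
      (∀ (x : R) (m : M),
        φ (inl x + inr m) =
          inl (algebraMap R (Localization (regOnSubmonoid R M)) x) +
            inr (LocalizedModule.mkLinearMap (regOnSubmonoid R M) M m)) ∧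
      Function.Injective φ ∧
      (∀ z ∈ nonZeroDivisors (TrivSqZeroExt R M), IsUnit (φ z)) ∧
      (∀ w : TrivSqZeroExt (Localization (regOnSubmonoid R M))
          (LocalizedModule (regOnSubmonoid R M) M),
        ∃ z : TrivSqZeroExt R M, ∃ u ∈ nonZeroDivisors (TrivSqZeroExt R M),
          w * φ u = φ z)) ∧
    (∀ (x : R) (m : M),
      ((inl x + inr m : TrivSqZeroExt R M) ∈ nonZeroDivisors (TrivSqZeroExt R M) ↔
        x ∈ regOnSubmonoid R M)) ∧
    (∀ (x : R) (m : M),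
      (IsUnit (inl x + inr m : TrivSqZeroExt R M) ↔ IsUnit x)) := by
  set U := regOnSubmonoid R M with hUdef
  set S := Localization U
  set N := LocalizedModule U M
  have hpair : ∀ (x : R) (m : M), (inl x + inr m : TrivSqZeroExt R M) = ⟨x, m⟩ := by
    intro x m; ext <;> simp
  -- the nonzerodivisor characterization
  have hnzd : ∀ (x : R) (m : M),
      (inl x + inr m : TrivSqZeroExt R M) ∈ nonZeroDivisors (TrivSqZeroExt R M) ↔ x ∈ U := by
    intro x m
    rw [hpair]
    constructor
    · intro h n hn
      have : (inr n : TrivSqZeroExt R M) * ⟨x, m⟩ = 0 := by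
        ext
        · exact zero_mul x
        · show (0 : R) • m + op x • n = 0
          rw [op_smul_eq_smul, zero_smul, zero_add, hn]
      have := (mem_nonZeroDivisors_iff_right.mp h) _ this
      simpa using congrArg TrivSqZeroExt.snd this
    · intro hx
      refine mem_nonZeroDivisors_iff_right.mpr ?_
      intro z hz
      have h1 : z.fst * x = 0 := congrArg TrivSqZeroExt.fst hz
      have h2 : z.fst • m + op x • z.snd = 0 := congrArg TrivSqZeroExt.snd hz
      have hy : z.fst = 0 := (mem_nonZeroDivisors_iff_right.mp (hU x hx)) _ h1
      have : x • z.snd = 0 := by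
        rw [op_smul_eq_smul] at h2
        rw [hy, zero_smul, zero_add] at h2
        exact h2
      have hsnd : z.snd = 0 := hx _ this
      ext
      · exact hy
      · exact hsnd
  refine ⟨⟨philoc R M, ?_, ?_, ?_, ?_⟩, hnzd, ?_⟩
  · intro x m
    rw [hpair]
    ext <;> simp [philoc] <;> rfl
  · -- injectivity
    intro z w h
    have hUle : U ≤ nonZeroDivisors R := fun a ha => hU a ha
    have h1 : algebraMap R S z.fst = algebraMap R S w.fst :=
      congrArg TrivSqZeroExt.fst h
    have h2 : LocalizedModule.mk z.snd 1 = LocalizedModule.mk w.snd 1 :=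
      congrArg TrivSqZeroExt.snd h
    ext
    · exact IsLocalization.injective S hUle h1
    · obtain ⟨u, hu⟩ := LocalizedModule.mk_eq.mp h2
      simp only [one_smul] at hu
      have hu' : (u : R) • z.snd = (u : R) • w.snd := hu
      have := u.2 (z.snd - w.snd) (by rw [smul_sub, hu', sub_self])
      exact sub_eq_zero.mp this
  · -- nonzerodivisors map to units
    intro z hz
    rw [← inl_fst_add_inr_snd_eq z] at hz
    have hfst : z.fst ∈ U := (hnzd z.fst z.snd).mp hz
    rw [isUnit_iff_isUnit_fst]
    exact IsLocalization.map_units S (⟨z.fst, hfst⟩ : U)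
  · -- surjectivity up to denominators
    intro w
    obtain ⟨⟨r, s⟩, hrs⟩ := IsLocalization.surj (M := U) (S := S) w.fst
    obtain ⟨⟨m, t⟩, hmt⟩ : ∃ p : M × U, LocalizedModule.mk p.1 p.2 = w.snd :=
      Quotient.exists_rep w.snd
    refine ⟨inl (r * (t : R)) + inr (s • m), inl ((s : R) * (t : R)), ?_, ?_⟩
    · rw [show (inl ((s:R)*(t:R)) : TrivSqZeroExt R M) = inl ((s:R)*(t:R)) + inr 0 by simp]
      exact (hnzd _ _).mpr (mul_mem s.2 t.2)
    · have hφu : philoc R M (inl ((s:R)*(t:R))) =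
          (⟨algebraMap R S ((s:R)*(t:R)), 0⟩ : TrivSqZeroExt S N) := by
        ext
        · rfl
        · show LocalizedModule.mk (0 : M) 1 = 0
          simp
      have hφz : philoc R M (inl (r * (t:R)) + inr (s • m)) =
          (⟨algebraMap R S (r * (t:R)), LocalizedModule.mk (s • m) 1⟩ : TrivSqZeroExt S N) := by
        ext
        · show algebraMap R S (r * (t:R) + 0) = algebraMap R S (r * (t:R))
          simp
        · show LocalizedModule.mk (0 + s • m) 1 = LocalizedModule.mk (s • m) 1
          simp
      rw [hφu, hφz]
      ext
      · show w.fst * algebraMap R S ((s:R)*(t:R)) = algebraMap R S (r * (t:R))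
        rw [map_mul, ← mul_assoc, hrs, ← map_mul]
      · show w.fst • (0 : N) + op (algebraMap R S ((s:R)*(t:R))) • w.snd =
          LocalizedModule.mk (s • m) 1
        rw [smul_zero, zero_add, op_smul_eq_smul, algebraMap_smul, ← hmt,
          LocalizedModule.smul'_mk]
        rw [LocalizedModule.mk_eq]
        exact ⟨1, by simp [Submonoid.smul_def, mul_smul, smul_comm ((t:R)) ((s:R))]⟩
  · -- units
    intro x m
    rw [isUnit_iff_isUnit_fst]
    simp
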